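/- For a nonzero ordinal γ and nonzero finite m, the ordinal ω^γ·(m+1) is not homeomorphic to any subspace of ω^γ·m + 1; hence ω^γ·(m+1) and ω^γ·m + 1 are not biembeddable. -/

import Mathlib

open Set Ordinal
open scoped Cardinal

namespace Ordinal

universe u

/-- Natural (Hessenberg) addition, as defined in Mathlib (December 2024), where it has since been removed. -/
noncomputable def nadd : Ordinal.{u} → Ordinal.{u} → Ordinal.{u}
  | a, b =>
    max (blsub.{u, u} a fun a' _ => nadd a' b) (blsub.{u, u} b fun b' _ => nadd a b')
termination_by o₁ o₂ => (o₁, o₂)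

end Ordinal

infixl:65 " ♯ " => Ordinal.nadd

noncomputable section

/-- Derived set (non-isolated points) of a set of ordinals, as a subspace. -/
def deriv' (s : Set Ordinal.{0}) : Set Ordinal.{0} := {x ∈ s | x ∈ closure (s \ {x})}

/-- Iterated Cantor–Bendixson derivative. -/
def iterDeriv (s : Set Ordinal.{0}) (o : Ordinal.{0}) : Set Ordinal.{0} :=
  Ordinal.limitRecOn o s (fun _ ih => deriv' ih) (fun o _ ih => ⋂ (p : Ordinal.{0}) (h : p < o), ih p h)

/-- `s` contains a homeomorphic copy of the ordinal `α` (with its order topology). -/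
def HomeoCopy (α : Ordinal.{0}) (s : Set Ordinal.{0}) : Prop :=
  ∃ t : Set Ordinal, t ⊆ s ∧ Nonempty ((Iio α : Set Ordinal.{0}) ≃ₜ t)

/-- Two ordinals are biembeddable: each is homeomorphic to a subspace of the other. -/
def Biembed (α β : Ordinal.{0}) : Prop := HomeoCopy α (Iio β) ∧ HomeoCopy β (Iio α)

/-- Two sets of ordinals are order-homeomorphic: there is an order-preserving homeomorphism. -/
def OrderHomeo (X Y : Set Ordinal.{0}) : Prop :=
  ∃ e : X ≃ₜ Y, ∀ a b : X, a ≤ b ↔ e a ≤ e b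

/-- An ordinal is order-reinforcing. -/
def OrderReinforcing (α : Ordinal.{0}) : Prop :=
  ∀ X : Set Ordinal, Nonempty ((Iio α : Set Ordinal.{0}) ≃ₜ X) → ∃ Y ⊆ X, OrderHomeo (Iio α) Y

/-- The Cantor–Bendixson rank of an ordinal: the least exponent in its Cantor normal form. -/
def CB (x : Ordinal.{0}) : Ordinal := if x = 0 then 0 else sSup {γ | (ω : Ordinal.{0}) ^ γ ∣ x}

/-- The natural (Hessenberg) sum of a finite family of ordinals. -/
def natSumFam {k : ℕ} (α : Fin k → Ordinal.{0}) : Ordinal := (List.ofFn α).foldr (· ♯ ·) 0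

/-- The Milner–Rado sum of a finite family of ordinals. -/
def mrSumFam {k : ℕ} (α : Fin k → Ordinal.{0}) : Ordinal :=
  sInf {δ | ∀ β : Fin k → Ordinal, (∀ i, β i < α i) → δ ≠ natSumFam β}

/-- The topological pigeonhole relation `β → (top α i)¹` for finitely many colours. -/
def TopPH {k : ℕ} (β : Ordinal.{0}) (α : Fin k → Ordinal.{0}) : Prop :=
  ∀ c : Ordinal → Fin k, ∃ i, HomeoCopy (α i) (Iio β ∩ c ⁻¹' {i})

/-- The topological pigeonhole relation with an arbitrary index type of colours. -/
def TopPHFam {ι : Type*} (β : Ordinal.{0}) (α : ι → Ordinal.{0}) : Prop :=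
  ∀ c : Ordinal → ι, ∃ i, HomeoCopy (α i) (Iio β ∩ c ⁻¹' {i})

/-- `ω̄[γ, m]`: `ω ^ γ * m + 1` if `γ > 0`, and `m` if `γ = 0`. -/
def obar (γ : Ordinal.{0}) (m : ℕ) : Ordinal := if γ = 0 then (m : Ordinal.{0}) else ω ^ γ * m + 1

/-- `C` is closed and unbounded in `o`. -/
def IsClubIn (C : Set Ordinal.{0}) (o : Ordinal.{0}) : Prop :=
  C ⊆ Iio o ∧ (∀ x < o, ∃ y ∈ C, x ≤ y) ∧
    ∀ x < o, x ≠ 0 → (∀ y < x, ∃ z ∈ C, y < z ∧ z < x) → x ∈ C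

/-- `S` is stationary in `o`: it meets every club subset of `o`. -/
def StationaryIn (S : Set Ordinal.{0}) (o : Ordinal.{0}) : Prop :=
  ∀ C, IsClubIn C o → (S ∩ C).Nonempty


theorem iterDeriv_zero (s : Set Ordinal) : iterDeriv s 0 = s := limitRecOn_zero ..

theorem iterDeriv_succ (s : Set Ordinal) (o : Ordinal) :
    iterDeriv s (Order.succ o) = deriv' (iterDeriv s o) := limitRecOn_succ ..

theorem iterDeriv_limit (s : Set Ordinal) {o : Ordinal} (h : o |> Order.IsSuccLimit) :
    iterDeriv s o = ⋂ (p : Ordinal) (_ : p < o), iterDeriv s p := limitRecOn_limit _ _ _ _ h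

theorem deriv'_subset (s : Set Ordinal) : deriv' s ⊆ s := fun _ hx => hx.1

theorem iterDeriv_subset (s : Set Ordinal) (o : Ordinal) : iterDeriv s o ⊆ s := by
  induction o using Ordinal.induction with
  | h o IH =>
    rcases Ordinal.zero_or_succ_or_isSuccLimit o with h | ⟨p, rfl⟩ | h
    · subst h; rw [iterDeriv_zero]
    · rw [← Ordinal.add_one_eq_succ, Ordinal.add_one_eq_succ, iterDeriv_succ]
      exact (deriv'_subset _).trans (IH p (Order.lt_succ p))
    · rw [iterDeriv_limit s h]
      intro x hx
      have := mem_iInter₂.mp hx 0 h.pos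
      rwa [iterDeriv_zero] at this

theorem iterDeriv_anti (s : Set Ordinal) {p q : Ordinal} (h : p ≤ q) :
    iterDeriv s q ⊆ iterDeriv s p := by
  induction q using Ordinal.induction with
  | h q IH =>
    rcases Ordinal.zero_or_succ_or_isSuccLimit q with h0 | ⟨r, rfl⟩ | hl
    · subst h0; rw [nonpos_iff_eq_zero.mp h]
    · rcases Order.le_succ_iff_eq_or_le.mp h with rfl | hpr
      · exact subset_rfl
      · rw [iterDeriv_succ]
        exact (deriv'_subset _).trans (IH r (Order.lt_succ r) hpr)
    · rcases eq_or_lt_of_le h with rfl | hpq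
      · exact subset_rfl
      · rw [iterDeriv_limit s hl]
        exact fun x hx => mem_iInter₂.mp hx p hpq

theorem deriv'_mono {s t : Set Ordinal} (h : s ⊆ t) : deriv' s ⊆ deriv' t := by
  rintro x ⟨hxs, hxc⟩
  exact ⟨h hxs, closure_mono (diff_subset_diff_left h) hxc⟩

theorem iterDeriv_mono {s t : Set Ordinal} (h : s ⊆ t) (o : Ordinal) :
    iterDeriv s o ⊆ iterDeriv t o := by
  induction o using Ordinal.induction with
  | h o IH =>
    rcases Ordinal.zero_or_succ_or_isSuccLimit o with h0 | ⟨p, rfl⟩ | hl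
    · subst h0; rw [iterDeriv_zero, iterDeriv_zero]; exact h
    · rw [iterDeriv_succ, iterDeriv_succ]
      exact deriv'_mono (IH p (Order.lt_succ p))
    · rw [iterDeriv_limit s hl, iterDeriv_limit t hl]
      exact iInter₂_mono fun p hp => IH p hp

theorem deriv'_inter_open {s U : Set Ordinal} (hU : IsOpen U) :
    deriv' (s ∩ U) = deriv' s ∩ U := by
  ext x
  constructor
  · rintro ⟨⟨hxs, hxU⟩, hxc⟩
    exact ⟨⟨hxs, closure_mono (diff_subset_diff_left inter_subset_left) hxc⟩, hxU⟩
  · rintro ⟨⟨hxs, hxc⟩, hxU⟩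
    refine ⟨⟨hxs, hxU⟩, ?_⟩
    rw [mem_closure_iff] at hxc ⊢
    intro V hV hxV
    obtain ⟨y, hy⟩ := hxc (V ∩ U) (hV.inter hU) ⟨hxV, hxU⟩
    exact ⟨y, ⟨hy.1.1, ⟨hy.2.1, hy.1.2⟩, hy.2.2⟩⟩

theorem iterDeriv_inter_open {s U : Set Ordinal} (hU : IsOpen U) (o : Ordinal) :
    iterDeriv (s ∩ U) o = iterDeriv s o ∩ U := by
  induction o using Ordinal.induction with
  | h o IH =>
    rcases Ordinal.zero_or_succ_or_isSuccLimit o with h0 | ⟨p, rfl⟩ | hl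
    · subst h0; rw [iterDeriv_zero, iterDeriv_zero]
    · rw [iterDeriv_succ, iterDeriv_succ, IH p (Order.lt_succ p), deriv'_inter_open hU]
    · rw [iterDeriv_limit _ hl, iterDeriv_limit _ hl]
      ext x
      simp only [mem_iInter, mem_inter_iff]
      constructor
      · intro h
        have h2 := h 0 hl.pos
        rw [IH 0 hl.pos] at h2
        refine ⟨fun p hp => ?_, h2.2⟩
        have h3 := h p hp
        rw [IH p hp] at h3
        exact h3.1
      · rintro ⟨h, hxU⟩ p hp
        rw [IH p hp]; exact ⟨h p hp, hxU⟩

theorem deriv'_isClosed {s : Set Ordinal} (hs : IsClosed s) : IsClosed (deriv' s) := by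
  rw [← isOpen_compl_iff]
  rw [isOpen_iff_forall_mem_open]
  intro x hx
  by_cases hxs : x ∈ s
  · have hxc : x ∉ closure (s \ {x}) := fun h => hx ⟨hxs, h⟩
    refine ⟨(closure (s \ {x}))ᶜ, ?_, isClosed_closure.isOpen_compl, hxc⟩
    intro y hy hy2
    obtain ⟨hys, hyc⟩ := hy2
    rcases eq_or_ne y x with rfl | hyx
    · exact hxc hyc
    · have hsub : s \ {y} ⊆ (s \ {x}) ∪ {x} := by
        intro z hz
        rcases eq_or_ne z x with rfl | hzx
        · exact Or.inr rfl
        · exact Or.inl ⟨hz.1, hzx⟩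
      have hcl2 := closure_mono hsub hyc
      rw [closure_union, closure_singleton] at hcl2
      rcases hcl2 with h2 | h2
      · exact hy h2
      · exact hyx (mem_singleton_iff.mp h2)
  · exact ⟨sᶜ, fun y hy hy2 => hy hy2.1, hs.isOpen_compl, hxs⟩

theorem iterDeriv_isClosed {s : Set Ordinal} (hs : IsClosed s) (o : Ordinal) :
    IsClosed (iterDeriv s o) := by
  induction o using Ordinal.induction with
  | h o IH =>
    rcases Ordinal.zero_or_succ_or_isSuccLimit o with h0 | ⟨p, rfl⟩ | hl
    · subst h0; rwa [iterDeriv_zero]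
    · rw [iterDeriv_succ]; exact deriv'_isClosed (IH p (Order.lt_succ p))
    · rw [iterDeriv_limit _ hl]; exact isClosed_iInter fun p => isClosed_iInter fun hp => IH p hp

theorem deriv'_nonempty_of_infinite {s : Set Ordinal} (hc : IsCompact s) (hi : s.Infinite) :
    (deriv' s).Nonempty := by
  by_contra h
  rw [not_nonempty_iff_eq_empty] at h
  have key : ∀ x ∈ s, ∃ U : Set Ordinal, IsOpen U ∧ x ∈ U ∧ U ∩ s ⊆ {x} := by
    intro x hxs
    have hx : x ∉ closure (s \ {x}) := fun hcl => (eq_empty_iff_forall_notMem.mp h x) ⟨hxs, hcl⟩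
    refine ⟨(closure (s \ {x}))ᶜ, isClosed_closure.isOpen_compl, hx, ?_⟩
    rintro y ⟨hyU, hys⟩
    by_contra hyx
    exact hyU (subset_closure ⟨hys, hyx⟩)
  choose U hUo hUx hUs using key
  obtain ⟨F, hF⟩ := hc.elim_finite_subcover (fun x : s => U x x.2)
    (fun x : s => hUo x x.2) (fun y hy => mem_iUnion.mpr ⟨⟨y, hy⟩, hUx y hy⟩)
  apply hi
  apply Set.Finite.subset (Set.Finite.image (fun x : {y // y ∈ s} => (x : Ordinal)) F.finite_toSet)
  intro y hy
  have hy2 := hF hy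
  rw [mem_iUnion₂] at hy2
  obtain ⟨x, hxF, hyx⟩ := hy2
  have : y = (x : Ordinal) := hUs x x.2 ⟨hyx, hy⟩
  exact ⟨x, hxF, this.symm⟩

theorem iterDeriv_nonempty {s : Set Ordinal} (hc : IsCompact s) (hcl : IsClosed s)
    {γ : Ordinal} (hγ : γ ≠ 0) (hi : ∀ δ < γ, (iterDeriv s δ).Infinite) :
    (iterDeriv s γ).Nonempty := by
  rcases Ordinal.zero_or_succ_or_isSuccLimit γ with h0 | ⟨p, rfl⟩ | hl
  · exact absurd h0 hγ
  · rw [iterDeriv_succ]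
    exact deriv'_nonempty_of_infinite
      (hc.of_isClosed_subset (iterDeriv_isClosed hcl p) (iterDeriv_subset s p))
      (hi p (Order.lt_succ p))
  · rw [iterDeriv_limit _ hl]
    have : Nonempty {p : Ordinal // p < γ} := ⟨⟨0, hl.pos⟩⟩
    have key := IsCompact.nonempty_iInter_of_directed_nonempty_isCompact_isClosed
      (fun p : {p : Ordinal // p < γ} => iterDeriv s p.1)
      ?_ (fun p => (hi p.1 p.2).nonempty)
      (fun p => hc.of_isClosed_subset (iterDeriv_isClosed hcl p.1) (iterDeriv_subset s p.1))
      (fun p => iterDeriv_isClosed hcl p.1)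
    · rw [show (⋂ (p : Ordinal) (_ : p < γ), iterDeriv s p)
        = ⋂ (p : {p : Ordinal // p < γ}), iterDeriv s p.1 from
          (iInter_subtype (fun p => p < γ) (fun q => iterDeriv s q.1)).symm]
      exact key
    · intro p q
      rcases le_total p.1 q.1 with h | h
      · exact ⟨q, iterDeriv_anti s h, subset_rfl⟩
      · exact ⟨p, subset_rfl, iterDeriv_anti s h⟩

theorem val_image_preimage_diff {s : Set Ordinal} (S : Set Ordinal) (hS : S ⊆ s) (x : s) :
    Subtype.val '' (Subtype.val ⁻¹' S \ {x} : Set s) = S \ {(x : Ordinal)} := by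
  ext y
  constructor
  · rintro ⟨z, ⟨hz, hzx⟩, rfl⟩
    exact ⟨hz, fun h => hzx (Subtype.ext h)⟩
  · rintro ⟨hy, hyx⟩
    exact ⟨⟨y, hS hy⟩, ⟨hy, fun h => hyx (congrArg Subtype.val h)⟩, rfl⟩

theorem mem_closure_homeo {s t : Set Ordinal} (e : s ≃ₜ t) (P : Set s) (x : s) :
    x ∈ closure P ↔ e x ∈ closure (⇑e '' P) := by
  rw [← Homeomorph.image_closure]
  constructor
  · exact fun h => mem_image_of_mem e h
  · rintro ⟨z, hz, hze⟩
    rwa [← e.injective hze]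

theorem iterDeriv_homeo {s t : Set Ordinal} (e : s ≃ₜ t) (o : Ordinal) :
    ∀ x : s, ((x : Ordinal) ∈ iterDeriv s o ↔ ((e x : t) : Ordinal) ∈ iterDeriv t o) := by
  induction o using Ordinal.induction with
  | h o IH =>
    intro x
    rcases Ordinal.zero_or_succ_or_isSuccLimit o with h0 | ⟨p, rfl⟩ | hl
    · subst h0
      rw [iterDeriv_zero, iterDeriv_zero]
      exact iff_of_true x.2 (e x).2
    · rw [iterDeriv_succ, iterDeriv_succ]
      have IHp := IH p (Order.lt_succ p)
      have hSs : iterDeriv s p ⊆ s := iterDeriv_subset s p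
      have hTt : iterDeriv t p ⊆ t := iterDeriv_subset t p
      have himg : ⇑e '' (Subtype.val ⁻¹' iterDeriv s p \ {x}) =
          Subtype.val ⁻¹' iterDeriv t p \ {e x} := by
        ext y
        constructor
        · rintro ⟨z, ⟨hzS, hzx⟩, rfl⟩
          exact ⟨(IHp z).mp hzS, fun h => hzx (e.injective h)⟩
        · rintro ⟨hyT, hyx⟩
          refine ⟨e.symm y, ⟨?_, ?_⟩, e.apply_symm_apply y⟩
          · apply (IHp (e.symm y)).mpr
            have : e (e.symm y) = y := e.apply_symm_apply y
            rw [this]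
            exact hyT
          · intro h
            apply hyx
            rw [mem_singleton_iff] at h ⊢
            rw [← h, e.apply_symm_apply]
      have hcl : (x : Ordinal) ∈ closure (iterDeriv s p \ {(x : Ordinal)}) ↔
          ((e x : t) : Ordinal) ∈ closure (iterDeriv t p \ {((e x : t) : Ordinal)}) := by
        rw [← val_image_preimage_diff _ hSs x, ← val_image_preimage_diff _ hTt (e x),
          ← closure_subtype, ← closure_subtype, mem_closure_homeo e, himg]
      exact and_congr (IHp x) hcl
    · rw [iterDeriv_limit _ hl, iterDeriv_limit _ hl]
      simp only [mem_iInter]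
      exact forall_congr' fun p => forall_congr' fun hp => IH p hp x

theorem exists_multiple_between {δ q x b : Ordinal}
    (hx : x = ω ^ (δ + 1) * q) (hb : b < x) :
    ∃ y, b < y ∧ y < x ∧ ω ^ δ ∣ y ∧ y ≠ 0 := by
  have hne : (ω : Ordinal) ^ δ ≠ 0 := opow_ne_zero δ omega0_ne_zero
  have hpos : (0 : Ordinal) < ω ^ δ := opow_pos δ omega0_pos
  have hq : q ≠ 0 := by
    rintro rfl
    rw [mul_zero] at hx
    exact absurd (hx ▸ hb) not_lt_zero
  have hx2 : x = ω ^ δ * (ω * q) := by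
    rw [hx, Ordinal.add_one_eq_succ, opow_succ, mul_assoc]
  set c := b / ω ^ δ + 1 with hc
  refine ⟨ω ^ δ * c, ?_, ?_, ⟨c, rfl⟩, ?_⟩
  · have h1 : ω ^ δ * (b / ω ^ δ) + b % ω ^ δ = b := Ordinal.div_add_mod b (ω ^ δ)
    have h2 : b % ω ^ δ < ω ^ δ := Ordinal.mod_lt b hne
    calc b = ω ^ δ * (b / ω ^ δ) + b % ω ^ δ := h1.symm
    _ < ω ^ δ * (b / ω ^ δ) + ω ^ δ := add_lt_add_right h2 _
    _ = ω ^ δ * c := by rw [hc, mul_add, mul_one]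
  · have hdiv : b / ω ^ δ < ω * q := (Ordinal.div_lt hne).mpr (by rwa [← hx2])
    have hlim : Order.IsSuccLimit (ω * q) := isSuccLimit_mul_left isSuccLimit_omega0 (pos_iff_ne_zero.mpr hq)
    have hcq : c < ω * q := by
      rw [hc, Ordinal.add_one_eq_succ]
      exact hlim.succ_lt hdiv
    rw [hx2]
    exact (mul_lt_mul_iff_of_pos_left hpos).mpr hcq
  · exact mul_ne_zero hne (by rw [hc, Ordinal.add_one_eq_succ]; exact (Order.succ_ne_bot _))

theorem omega_opow_dvd_of_forall {δ x : Ordinal} (hl : δ |> Order.IsSuccLimit)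
    (h : ∀ p < δ, ω ^ p ∣ x) : ω ^ δ ∣ x := by
  have hne : (ω : Ordinal) ^ δ ≠ 0 := opow_ne_zero δ omega0_ne_zero
  rw [Ordinal.dvd_iff_mod_eq_zero]
  by_contra hr
  have hrlt : x % ω ^ δ < ω ^ δ := Ordinal.mod_lt x hne
  obtain ⟨p, hp, hrp⟩ := (Ordinal.lt_opow_of_isSuccLimit omega0_ne_zero hl).mp hrlt
  have h1 : ω ^ p ∣ ω ^ δ * (x / ω ^ δ) := (opow_dvd_opow ω hp.le).mul_right _
  have h2 : ω ^ p ∣ x % ω ^ δ := by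
    have := Ordinal.div_add_mod x (ω ^ δ)
    exact (Ordinal.dvd_add_iff h1).mp (this.symm ▸ h p hp)
  exact absurd hrp (not_lt.mpr (Ordinal.le_of_dvd hr h2))

def Tset (μ δ : Ordinal) : Set Ordinal := {x | x < μ ∧ x ≠ 0 ∧ ω ^ δ ∣ x}

theorem deriv'_sandwich {μ δ : Ordinal} {s : Set Ordinal}
    (h1 : Tset μ δ ⊆ s) (h2 : s ⊆ Tset μ δ ∪ {0}) :
    deriv' s = Tset μ (δ + 1) := by
  have hpos : (0 : Ordinal) < ω ^ δ := opow_pos δ omega0_pos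
  ext x
  constructor
  · rintro ⟨hxs, hxcl⟩
    have hx0 : x ≠ 0 := by
      rintro rfl
      rw [mem_closure_iff] at hxcl
      obtain ⟨y, hy1, -, hy3⟩ := hxcl (Iio 1) isOpen_Iio (by norm_num)
      exact hy3 (Ordinal.lt_one_iff_zero.mp hy1)
    obtain ⟨hxμ, -, c, hc⟩ := (h2 hxs).resolve_right (by simpa using hx0)
    have hcd : ω * (c / ω) + c % ω = c := Ordinal.div_add_mod c ω
    obtain ⟨k, hk⟩ := Ordinal.lt_omega0.mp (Ordinal.mod_lt c omega0_ne_zero)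
    cases k with
    | zero =>
      have hceq : ω * (c / ω) = c := by
        conv_rhs => rw [← hcd]
        rw [hk, Nat.cast_zero, add_zero]
      exact ⟨hxμ, hx0, c / ω,
        by rw [Ordinal.add_one_eq_succ, opow_succ, mul_assoc, hceq, ← hc]⟩
    | succ k' =>
      exfalso
      set a := ω ^ δ * (ω * (c / ω) + k') with ha
      have hax : a < x := by
        rw [hc, ← hcd, hk]
        apply (mul_lt_mul_iff_of_pos_left hpos).mpr
        apply add_lt_add_right
        rw [Nat.cast_succ]
        exact lt_add_one _
      have hxsucc : x < x + 1 := by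
        rw [Ordinal.add_one_eq_succ]; exact Order.lt_succ x
      rw [mem_closure_iff] at hxcl
      obtain ⟨y, ⟨hy1, hy2⟩, hys, hyx⟩ := hxcl (Ioo a (x + 1)) isOpen_Ioo ⟨hax, hxsucc⟩
      have hy0 : y ≠ 0 := by
        rintro rfl
        exact not_lt_zero hy1
      obtain ⟨hyμ, -, c', hc'⟩ := (h2 hys).resolve_right (by simpa using hy0)
      rw [Ordinal.add_one_eq_succ, Order.lt_succ_iff] at hy2
      have hlow : ω * (c / ω) + (k' : Ordinal) < c' := by
        apply (mul_lt_mul_iff_of_pos_left hpos).mp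
        rw [← hc', ← ha]
        exact hy1
      have hhigh : c' ≤ c := by
        apply (mul_le_mul_iff_of_pos_left hpos).mp
        rw [← hc', ← hc]
        exact hy2
      have hceq : c' = c := by
        refine le_antisymm hhigh ?_
        rw [← hcd, hk, Nat.cast_succ, ← add_assoc, Ordinal.add_one_eq_succ]
        exact Order.succ_le_of_lt hlow
      exact hyx (mem_singleton_iff.mpr (hc'.trans (by rw [hceq, ← hc])))
  · rintro ⟨hxμ, hx0, q, hq⟩
    have hxpos : 0 < x := pos_iff_ne_zero.mpr hx0
    have key : ∀ b < x, ∃ y, (y ∈ s \ {x} ∧ y < x) ∧ b < y := by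
      intro b hb
      obtain ⟨y, hby, hyx, hdvd, hy0⟩ := exists_multiple_between hq hb
      exact ⟨y, ⟨⟨h1 ⟨hyx.trans hxμ, hy0, hdvd⟩, fun h => (ne_of_lt hyx) h⟩, hyx⟩, hby⟩
    set M := {y | (y ∈ s \ {x} ∧ y < x)} with hM
    have hMne : M.Nonempty := by
      obtain ⟨y, hy, -⟩ := key 0 hxpos
      exact ⟨y, hy⟩
    have hlub : IsLUB M x := by
      constructor
      · exact fun y hy => hy.2.le
      · intro b hb
        by_contra hbx
        obtain ⟨y, hy, hby⟩ := key b (lt_of_not_ge hbx)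
        exact absurd (hb hy) (not_le.mpr hby)
    refine ⟨?_, ?_⟩
    · apply h1
      refine ⟨hxμ, hx0, ω * q, ?_⟩
      rw [hq, Ordinal.add_one_eq_succ, opow_succ, mul_assoc]
    · exact closure_mono (fun y hy => hy.1) (hlub.mem_closure hMne)

theorem iterDeriv_Iio (μ : Ordinal) : ∀ δ, δ ≠ 0 → iterDeriv (Iio μ) δ = Tset μ δ := by
  intro δ
  induction δ using Ordinal.induction with
  | h δ IH =>
    intro hδ
    rcases Ordinal.zero_or_succ_or_isSuccLimit δ with h0 | ⟨p, rfl⟩ | hl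
    · exact absurd h0 hδ
    · rw [iterDeriv_succ]
      have hsand : Tset μ p ⊆ iterDeriv (Iio μ) p ∧ iterDeriv (Iio μ) p ⊆ Tset μ p ∪ {0} := by
        rcases eq_or_ne p 0 with rfl | hp
        · rw [iterDeriv_zero]
          constructor
          · exact fun x hx => hx.1
          · intro x hx
            rcases eq_or_ne x 0 with rfl | hx0
            · exact Or.inr rfl
            · exact Or.inl ⟨hx, hx0, by rw [opow_zero]; exact one_dvd x⟩
        · rw [IH p (Order.lt_succ p) hp]
          exact ⟨subset_rfl, subset_union_left⟩
      rw [deriv'_sandwich hsand.1 hsand.2, Ordinal.add_one_eq_succ]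
    · rw [iterDeriv_limit _ hl]
      ext x
      simp only [mem_iInter]
      constructor
      · intro h
        have h1 := h 1 (one_lt_of_isSuccLimit hl)
        rw [IH 1 (one_lt_of_isSuccLimit hl) one_ne_zero] at h1
        obtain ⟨hxμ, hx0, -⟩ := h1
        refine ⟨hxμ, hx0, omega_opow_dvd_of_forall hl fun p hp => ?_⟩
        rcases eq_or_ne p 0 with rfl | hp0
        · rw [opow_zero]; exact one_dvd x
        · have h2 := h p hp
          rw [IH p hp hp0] at h2
          exact h2.2.2
      · intro hx p hp
        rcases eq_or_ne p 0 with rfl | hp0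
        · rw [iterDeriv_zero]; exact hx.1
        · rw [IH p hp hp0]
          exact ⟨hx.1, hx.2.1, dvd_trans (opow_dvd_opow ω hp.le) hx.2.2⟩

theorem not_homeocopy (γ m : Ordinal.{0}) (hγ : γ ≠ 0) (hm : m ≠ 0) (hmfin : m < ω) :
    ¬ HomeoCopy (ω ^ γ * (m + 1)) (Iio (ω ^ γ * m + 1)) := by
  rintro ⟨X, hXsub, ⟨e⟩⟩
  obtain ⟨n, rfl⟩ := Ordinal.lt_omega0.mp hmfin
  set β := ω ^ γ * (n : Ordinal) with hβ
  set α := ω ^ γ * ((n : Ordinal) + 1) with hα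
  have hωγpos : (0 : Ordinal) < ω ^ γ := opow_pos γ omega0_pos
  have hβα : β < α := by
    rw [hβ, hα, mul_lt_mul_iff_of_pos_left hωγpos]
    exact lt_add_one _
  have hIicIio : Iic β = Iio (β + 1) := by
    ext x
    rw [mem_Iic, mem_Iio, Ordinal.add_one_eq_succ, Order.lt_succ_iff]
  have hkey : ∀ c : Ordinal, ω ^ γ * c < α ↔ c ≤ (n : Ordinal) := by
    intro c
    rw [hα, mul_lt_mul_iff_of_pos_left hωγpos, Ordinal.add_one_eq_succ, Order.lt_succ_iff]
  have hkey' : ∀ c : Ordinal, ω ^ γ * c < β + 1 ↔ c ≤ (n : Ordinal) := by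
    intro c
    rw [Ordinal.add_one_eq_succ, Order.lt_succ_iff, hβ, mul_le_mul_iff_of_pos_left hωγpos]
  -- the γ-th derivative of both Iio α and Iio (β+1) is M
  set M := Tset α γ with hMdef
  have hMeq : Tset (β + 1) γ = M := by
    ext x
    simp only [Tset, hMdef, mem_setOf_eq]
    constructor
    · rintro ⟨hlt, h0, c, rfl⟩
      exact ⟨(hkey c).mpr ((hkey' c).mp hlt), h0, c, rfl⟩
    · rintro ⟨hlt, h0, c, rfl⟩
      exact ⟨(hkey' c).mpr ((hkey c).mp hlt), h0, c, rfl⟩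
  have hMIic : M ⊆ Iic β := by
    rintro x ⟨hlt, h0, c, rfl⟩
    rw [mem_Iic, hβ]
    exact (mul_le_mul_iff_of_pos_left hωγpos).mpr ((hkey c).mp hlt)
  have hMIio : M ⊆ Iio α := fun x hx => hx.1
  have hMfin : M.Finite := by
    apply Set.Finite.subset ((Set.finite_Iic n).image fun k : ℕ => ω ^ γ * (k : Ordinal))
    rintro x ⟨hlt, h0, c, rfl⟩
    have hcn : c ≤ (n : Ordinal) := (hkey c).mp hlt
    obtain ⟨k, rfl⟩ := Ordinal.lt_omega0.mp (lt_of_le_of_lt hcn (nat_lt_omega0 n))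
    exact ⟨k, by exact_mod_cast hcn, rfl⟩
  -- key subsets of the domain
  set KA : Set (Iio α : Set Ordinal) := Subtype.val ⁻¹' (Iio (β + 1)) with hKA
  set TA : Set (Iio α : Set Ordinal) := Subtype.val ⁻¹' (Ioi β) with hTA
  have hKAopen : IsOpen KA := isOpen_Iio.preimage continuous_subtype_val
  have hTAcompl : TA = KAᶜ := by
    ext x
    simp only [hTA, hKA, mem_preimage, mem_Ioi, mem_compl_iff, mem_Iio, not_lt, ← hIicIio, mem_Iic]
    exact ⟨fun h => not_le.mpr h, fun h => not_le.mp h⟩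
  have hTAclosed : IsClosed TA := by rw [hTAcompl]; exact hKAopen.isClosed_compl
  set g : ↥(Iio α) → Ordinal := fun x => (e x).1 with hg
  have hginj : Function.Injective g := fun a b hab => e.injective (Subtype.ext hab)
  have hgX : ∀ x, g x ∈ X := fun x => (e x).2
  set eK := g '' KA with heK
  set eT := g '' TA with heT
  have hdisj : eK ∩ eT = ∅ := by
    rw [eq_empty_iff_forall_notMem]
    rintro y ⟨⟨a, ha, rfl⟩, ⟨b, hb, hba⟩⟩
    have : b = a := hginj hba
    subst this
    rw [hTAcompl] at hb
    exact hb ha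
  have hXunion : X = eK ∪ eT := by
    ext y
    constructor
    · intro hy
      set x := e.symm ⟨y, hy⟩ with hx
      have hgx : g x = y := by rw [hg]; simp [hx]
      rcases le_or_gt x.1 β with h | h
      · exact Or.inl ⟨x, by rw [hKA]; simpa [mem_preimage, ← hIicIio] using h, hgx⟩
      · exact Or.inr ⟨x, h, hgx⟩
    · rintro (⟨a, -, rfl⟩ | ⟨a, -, rfl⟩) <;> exact hgX a
  -- compactness of eK
  have hKAval : Subtype.val '' KA = Iio (β + 1) := by
    rw [hKA, Subtype.image_preimage_coe]
    apply inter_eq_self_of_subset_right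
    intro x hx
    rw [mem_Iio] at hx ⊢
    calc x < β + 1 := hx
    _ ≤ α := by rw [Ordinal.add_one_eq_succ, Order.succ_le_iff]; exact hβα
  have hKAcomp : IsCompact KA := by
    rw [Topology.IsEmbedding.subtypeVal.isCompact_iff, hKAval, ← hIicIio]
    have : Iic β = Icc 0 β := by ext x; simp [zero_le]
    rw [this]
    exact isCompact_Icc
  have heKcomp : IsCompact eK := by
    rw [heK]
    exact hKAcomp.image (continuous_subtype_val.comp e.continuous)
  have heKclosed : IsClosed eK := heKcomp.isClosed
  set U := eKᶜ with hU
  have hUopen : IsOpen U := heKclosed.isOpen_compl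
  have hXU : X ∩ U = eT := by
    rw [hXunion, hU, union_inter_distrib_right]
    rw [inter_compl_self, empty_union]
    apply inter_eq_self_of_subset_left
    intro y hy hyK
    exact (eq_empty_iff_forall_notMem.mp hdisj y) ⟨hyK, hy⟩
  have hloc : ∀ o, iterDeriv eT o = iterDeriv X o ∩ U := by
    intro o
    rw [← hXU, iterDeriv_inter_open hUopen]
  -- D = M
  have hformulaA : iterDeriv (Iio α) γ = M := iterDeriv_Iio α γ hγ
  have hDsub : iterDeriv X γ ⊆ M := by
    have h1 := iterDeriv_mono hXsub γ
    rwa [iterDeriv_Iio _ γ hγ, hMeq] at h1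
  have hDimg : iterDeriv X γ = g '' (Subtype.val ⁻¹' M) := by
    ext y
    constructor
    · intro hy
      have hyX : y ∈ X := iterDeriv_subset X γ hy
      set x := e.symm ⟨y, hyX⟩ with hx
      have hex : e x = ⟨y, hyX⟩ := by rw [hx]; exact e.apply_symm_apply _
      refine ⟨x, ?_, by rw [hg]; simp [hex]⟩
      rw [mem_preimage, ← hformulaA]
      exact (iterDeriv_homeo e γ x).mpr (by rw [hex]; exact hy)
    · rintro ⟨x, hxM, rfl⟩
      exact (iterDeriv_homeo e γ x).mp (by rw [hformulaA]; exact hxM)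
  have hMval : Subtype.val '' (Subtype.val ⁻¹' M : Set (Iio α : Set Ordinal)) = M := by
    rw [Subtype.image_preimage_coe]
    exact inter_eq_self_of_subset_right hMIio
  have hDM : iterDeriv X γ = M := by
    apply Set.eq_of_subset_of_ncard_le hDsub _ hMfin
    apply le_of_eq
    calc M.ncard = (Subtype.val ⁻¹' M : Set ↥(Iio α)).ncard := by
          conv_lhs => rw [← hMval]
          exact Set.ncard_image_of_injective _ Subtype.val_injective
    _ = (iterDeriv X γ).ncard := by rw [hDimg, Set.ncard_image_of_injective _ hginj]
  have hMeK : M ⊆ eK := by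
    intro z hz
    rw [← hDM, hDimg] at hz
    obtain ⟨x, hxM, rfl⟩ := hz
    refine ⟨x, ?_, rfl⟩
    rw [hKA, mem_preimage, ← hIicIio]
    exact hMIic hxM
  -- stages below γ of eT are infinite
  have hδle : ∀ δ, δ < γ → δ + 1 ≤ γ := fun δ hδ => by
    rw [Ordinal.add_one_eq_succ, Order.succ_le_iff]; exact hδ
  have hαeq : α = β + ω ^ γ := by rw [hα, hβ, mul_add, mul_one]
  have hxval : ∀ δ < γ, ∀ k : ℕ, β + ω ^ δ * ((k : Ordinal) + 1) ∈ Tset α δ ∩ Ioi β := by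
    intro δ hδ k
    have hlt : ω ^ δ * ((k : Ordinal) + 1) < ω ^ γ := by
      calc ω ^ δ * ((k : Ordinal) + 1) < ω ^ δ * ω := by
            rw [mul_lt_mul_iff_of_pos_left (opow_pos δ omega0_pos)]
            rw [← Nat.cast_succ]
            exact nat_lt_omega0 (k + 1)
      _ = ω ^ (δ + 1) := by rw [Ordinal.add_one_eq_succ, opow_succ]
      _ ≤ ω ^ γ := opow_le_opow_right omega0_pos (hδle δ hδ)
    have hpos : 0 < ω ^ δ * ((k : Ordinal) + 1) := by
      apply mul_pos (opow_pos δ omega0_pos)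
      rw [← Nat.cast_succ]
      exact_mod_cast Nat.succ_pos k
    refine ⟨⟨?_, ?_, ?_⟩, ?_⟩
    · rw [hαeq]
      exact add_lt_add_right hlt β
    · exact ne_of_gt (lt_of_le_of_lt (zero_le (a := β)) (lt_add_of_pos_right β hpos))
    · obtain ⟨c, hc⟩ : ∃ c, γ = δ + c := ⟨γ - δ, (Ordinal.add_sub_cancel_of_le hδ.le).symm⟩
      refine ⟨ω ^ c * n + ((k : Ordinal) + 1), ?_⟩
      conv_rhs => rw [mul_add (ω ^ δ), ← mul_assoc, ← opow_add, ← hc, ← hβ]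
    · exact lt_add_of_pos_right β hpos
  have hinf : ∀ δ < γ, (iterDeriv eT δ).Infinite := by
    intro δ hδ
    have hmemA : ∀ k : ℕ, β + ω ^ δ * ((k : Ordinal) + 1) ∈ iterDeriv (Iio α) δ := by
      intro k
      obtain ⟨⟨h1, h2, h3⟩, -⟩ := hxval δ hδ k
      rcases eq_or_ne δ 0 with rfl | hδ0
      · rw [iterDeriv_zero]; exact h1
      · rw [iterDeriv_Iio _ δ hδ0]; exact ⟨h1, h2, h3⟩
    have hxmono : StrictMono fun k : ℕ => β + ω ^ δ * ((k : Ordinal) + 1) := by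
      intro a b hab
      apply add_lt_add_right
      rw [mul_lt_mul_iff_of_pos_left (opow_pos δ omega0_pos), ← Nat.cast_succ, ← Nat.cast_succ]
      exact Nat.cast_lt.mpr (by omega)
    rw [hloc δ]
    refine Set.infinite_of_injective_forall_mem
      (f := fun k : ℕ => g ⟨β + ω ^ δ * ((k : Ordinal) + 1), (hxval δ hδ k).1.1⟩) ?_ ?_
    · intro a b hab
      have := hginj hab
      exact hxmono.injective (congrArg Subtype.val this)
    · intro k
      constructor
      · exact (iterDeriv_homeo e δ _).mp (hmemA k)
      · intro hk
        apply (eq_empty_iff_forall_notMem.mp hdisj (g ⟨_, (hxval δ hδ k).1.1⟩))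
        exact ⟨hk, ⟨_, (hxval δ hδ k).2, rfl⟩⟩
  have hTγ : iterDeriv eT γ = ∅ := by
    rw [hloc γ, hDM, eq_empty_iff_forall_notMem]
    rintro y ⟨hyM, hyU⟩
    exact hyU (hMeK hyM)
  -- closure of eT is compact; apply the derivative lemma
  set s := closure eT with hs
  have heTX : eT ⊆ X := by rintro y ⟨a, -, rfl⟩; exact hgX a
  have heTIic : eT ⊆ Iic β := fun y hy => by
    rw [hIicIio]; exact hXsub (heTX hy)
  have hsIic : s ⊆ Iic β := closure_minimal heTIic isClosed_Iic
  have hscomp : IsCompact s := by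
    apply IsCompact.of_isClosed_subset _ isClosed_closure
      (show s ⊆ Icc 0 β from fun x hx => ⟨zero_le (a := x), hsIic hx⟩)
    exact isCompact_Icc
  obtain ⟨z, hz⟩ := iterDeriv_nonempty hscomp isClosed_closure hγ
    (fun δ hδ => ((hinf δ hδ).mono (iterDeriv_mono subset_closure δ)))
  have hzM : z ∈ M := by
    have h1 := iterDeriv_mono (show s ⊆ Iio (β + 1) from fun x hx => by
      rw [← hIicIio]; exact hsIic hx) γ hz
    rwa [iterDeriv_Iio _ γ hγ, hMeq] at h1
  have hzX : z ∈ X := by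
    rw [← hDM] at hzM
    exact iterDeriv_subset X γ hzM
  -- z is in eT because eT is closed in X
  have hE : IsClosed (⇑e '' TA) := e.isClosed_image.mpr hTAclosed
  have hzeT : z ∈ eT := by
    have h1 : z ∈ closure (Subtype.val '' (⇑e '' TA)) := by
      have himg : Subtype.val '' (⇑e '' TA) = eT := by
        rw [heT, hg, image_image]
      rw [himg]
      exact iterDeriv_subset s γ hz
    have h2 : (⟨z, hzX⟩ : X) ∈ closure (⇑e '' TA) := closure_subtype.mpr h1
    rw [hE.closure_eq] at h2
    obtain ⟨a, ha, haz⟩ := h2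
    exact ⟨a, ha, congrArg Subtype.val haz⟩
  exact (eq_empty_iff_forall_notMem.mp hdisj z) ⟨hMeK hzM, hzeT⟩


/-- `ω^γ·(m+1)` is not homeomorphic to any subspace of `ω^γ·m + 1`; hence they are
not biembeddable. -/
theorem not_biembed_mul_succ (γ m : Ordinal.{0}) (hγ : γ ≠ 0) (hm : m ≠ 0) (hmfin : m < ω) :
    ¬ HomeoCopy (ω ^ γ * (m + 1)) (Iio (ω ^ γ * m + 1)) ∧
      ¬ Biembed (ω ^ γ * (m + 1)) (ω ^ γ * m + 1) := by
  have main := not_homeocopy γ m hγ hm hmfin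
  exact ⟨main, fun h => main h.1⟩

end
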